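/- Assume 𝒜 is smooth. Let S be the additive submonoid of ℤ² generated by the vectors (a, α−a) for a ∈ 𝒜, and let G be the subgroup of ℤ² generated by these vectors. Then S − ℕ·(α,0) := {u ∈ ℤ² : u + n·(α,0) ∈ S for some n ∈ ℕ} equals {u = (u₁,u₂) ∈ G : u₂ ≥ 0}, and symmetrically S − ℕ·(0,α) := {u ∈ ℤ² : u + n·(0,α) ∈ S for some n ∈ ℕ} equals {u = (u₁,u₂) ∈ G : u₁ ≥ 0}. -/

import Mathlib

open scoped Pointwise

/-- The `m`-fold sumset of a finite set `A ⊆ ℕ`, with `0 • A = {0}`. -/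
def sumset (A : Finset ℕ) : ℕ → Finset ℕ
  | 0 => {0}
  | m + 1 => sumset A m + A

/-- A subset of `ℕ` is full iff it equals `{0, 1, …, n}` for some `n`. -/
def IsFull (B : Finset ℕ) : Prop := ∃ n : ℕ, B = Finset.Iic n

/-- `{i, …, j}` is a gap of `B`: disjoint from `B`, with `i - 1 ∈ B` and `j + 1 ∈ B`. -/
def IsGap (B : Finset ℕ) (i j : ℕ) : Prop :=
  1 ≤ i ∧ i ≤ j ∧ (∀ k, i ≤ k → k ≤ j → k ∉ B) ∧ i - 1 ∈ B ∧ j + 1 ∈ B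

/-- `λ(B)`: the maximal length of a gap of `B` (`0` if there are no gaps). -/
noncomputable def gapLen (B : Finset ℕ) : ℕ :=
  sSup {n | ∃ i j, IsGap B i j ∧ n = j - i + 1}

/-- Property `(P₁)`. -/
def P1 (A : Finset ℕ) (α : ℕ) : Prop :=
  ∀ m : ℕ, ¬ IsFull (sumset A m) → ¬ IsFull (sumset A m + ({0, α} : Finset ℕ))

/-- Property `(P₂)`. -/
def P2 (A : Finset ℕ) (α : ℕ) : Prop :=
  ∀ m : ℕ, ¬ IsFull (sumset A m) →
    ¬ ((∀ k, k ≤ α → k ∈ sumset A m) ∧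
       (∀ k, (m - 1) * α ≤ k → k ≤ m * α → k ∈ sumset A m))

/-- The combinatorial reduction number `r(𝒜)`. -/
noncomputable def rA (A : Finset ℕ) (α : ℕ) : ℕ :=
  sInf {r : ℕ | sumset A (r + 1) = ({0, α} : Finset ℕ) + sumset A r}

/-- The combinatorial regularity `reg(𝒜)`. -/
noncomputable def regA (A : Finset ℕ) : ℕ :=
  sInf {m : ℕ | 1 ≤ m ∧ IsFull (sumset A m)}

/-- For smooth `𝒜`: `S − ℕ·(α,0) = {u ∈ G | u₂ ≥ 0}` and `S − ℕ·(0,α) = {u ∈ G | u₁ ≥ 0}`. -/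
theorem stmt_1 (𝒜 : Finset ℕ) (hne : 𝒜.Nonempty) (h0 : 0 ∈ 𝒜)
    (α : ℕ) (hα : α = 𝒜.max' hne) (hα2 : 2 ≤ α)
    (h1 : 1 ∈ 𝒜) (hαm1 : α - 1 ∈ 𝒜)
    (S : AddSubmonoid (ℤ × ℤ))
    (hS : S = AddSubmonoid.closure {v : ℤ × ℤ | ∃ a ∈ 𝒜, v = ((a : ℤ), (α : ℤ) - (a : ℤ))})
    (G : AddSubgroup (ℤ × ℤ))
    (hG : G = AddSubgroup.closure {v : ℤ × ℤ | ∃ a ∈ 𝒜, v = ((a : ℤ), (α : ℤ) - (a : ℤ))}) :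
    {u : ℤ × ℤ | ∃ n : ℕ, u + n • (((α : ℤ), (0 : ℤ)) : ℤ × ℤ) ∈ S} =
      {u : ℤ × ℤ | u ∈ G ∧ 0 ≤ u.2} ∧
    {u : ℤ × ℤ | ∃ n : ℕ, u + n • (((0 : ℤ), (α : ℤ)) : ℤ × ℤ) ∈ S} =
      {u : ℤ × ℤ | u ∈ G ∧ 0 ≤ u.1} := by
  have hαmem : α ∈ 𝒜 := hα ▸ 𝒜.max'_mem hne
  have hle : ∀ a ∈ 𝒜, a ≤ α := fun a ha => hα ▸ 𝒜.le_max' a ha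
  have memS : ∀ a ∈ 𝒜, (((a : ℤ), (α : ℤ) - (a : ℤ)) : ℤ × ℤ) ∈ S := fun a ha => by
    rw [hS]; exact AddSubmonoid.subset_closure ⟨a, ha, rfl⟩
  have hv10 : (((α : ℤ), (0 : ℤ)) : ℤ × ℤ) ∈ S := by
    have := memS α hαmem; simpa using this
  have hv01 : (((0 : ℤ), (α : ℤ)) : ℤ × ℤ) ∈ S := by
    have := memS 0 h0; simpa using this
  have hcast : ((α - 1 : ℕ) : ℤ) = (α : ℤ) - 1 := by
    have : 1 ≤ α := by omega
    push_cast [this]; ring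
  have hvA : (((α : ℤ) - 1, (1 : ℤ)) : ℤ × ℤ) ∈ S := by
    have := memS (α - 1) hαm1
    rw [hcast] at this
    convert this using 2 <;> ring
  have hvB : (((1 : ℤ), (α : ℤ) - 1) : ℤ × ℤ) ∈ S := by
    have := memS 1 h1; simpa using this
  have hSG : ∀ v ∈ S, v ∈ G := by
    intro v hv
    rw [hS] at hv; rw [hG]
    exact AddSubmonoid.closure_le.mpr
      (fun x hx => AddSubgroup.subset_closure hx) hv
  have hSnn : ∀ v ∈ S, 0 ≤ v.1 ∧ 0 ≤ v.2 := by
    intro v hv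
    rw [hS] at hv
    induction hv using AddSubmonoid.closure_induction with
    | mem x hx =>
      obtain ⟨a, ha, rfl⟩ := hx
      refine ⟨by positivity, ?_⟩
      have := hle a ha
      simp only
      have : (a : ℤ) ≤ (α : ℤ) := by exact_mod_cast this
      linarith
    | zero => simp
    | add x y _ _ hx hy => exact ⟨by simpa using add_nonneg hx.1 hy.1,
        by simpa using add_nonneg hx.2 hy.2⟩
  have hGdvd : ∀ v ∈ G, (α : ℤ) ∣ v.1 + v.2 := by
    intro v hv
    rw [hG] at hv
    induction hv using AddSubgroup.closure_induction with
    | mem x hx =>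
      obtain ⟨a, ha, rfl⟩ := hx
      simp
    | zero => simp
    | add x y _ _ hx hy =>
      have h := dvd_add hx hy
      simp only [Prod.fst_add, Prod.snd_add]
      convert h using 1; rfl; ring
    | neg x _ hx =>
      have h := hx.neg_right
      simp only [Prod.fst_neg, Prod.snd_neg]
      convert h using 1; rfl; ring
  constructor
  · ext u
    simp only [Set.mem_setOf_eq]
    constructor
    · rintro ⟨n, hn⟩
      have hG1 : u + n • (((α : ℤ), (0 : ℤ)) : ℤ × ℤ) ∈ G := hSG _ hn
      have hG2 : (((α : ℤ), (0 : ℤ)) : ℤ × ℤ) ∈ G := hSG _ hv10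
      have : u ∈ G := by
        have := G.sub_mem hG1 (G.nsmul_mem hG2 n)
        simpa using this
      refine ⟨this, ?_⟩
      have h2 := (hSnn _ hn).2
      simpa using h2
    · rintro ⟨huG, hy⟩
      obtain ⟨t, ht⟩ := hGdvd u huG
      -- u.1 - u.2 * (α - 1) = α * (t - u.2)
      have ht' : u.1 = u.2 * ((α : ℤ) - 1) + (α : ℤ) * (t - u.2) := by linarith [ht]
      set t' : ℤ := t - u.2 with ht'def
      by_cases h0t : 0 ≤ t'
      · refine ⟨0, ?_⟩
        have heq : u + (0 : ℕ) • (((α : ℤ), (0 : ℤ)) : ℤ × ℤ)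
            = u.2.toNat • (((α : ℤ) - 1, (1 : ℤ)) : ℤ × ℤ)
              + t'.toNat • (((α : ℤ), (0 : ℤ)) : ℤ × ℤ) := by
          have h2 : (u.2.toNat : ℤ) = u.2 := Int.toNat_of_nonneg hy
          have h3 : (t'.toNat : ℤ) = t' := Int.toNat_of_nonneg h0t
          apply Prod.ext <;> simp [nsmul_eq_mul, h2, h3] <;> linarith [ht']
        rw [heq]
        exact S.add_mem (S.nsmul_mem hvA _) (S.nsmul_mem hv10 _)
      · refine ⟨(-t').toNat, ?_⟩
        have heq : u + (-t').toNat • (((α : ℤ), (0 : ℤ)) : ℤ × ℤ)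
            = u.2.toNat • (((α : ℤ) - 1, (1 : ℤ)) : ℤ × ℤ) := by
          have h2 : (u.2.toNat : ℤ) = u.2 := Int.toNat_of_nonneg hy
          have h3 : (((-t').toNat : ℕ) : ℤ) = -t' := Int.toNat_of_nonneg (by linarith)
          apply Prod.ext <;> simp [nsmul_eq_mul, h2, h3] <;> linarith [ht']
        rw [heq]
        exact S.nsmul_mem hvA _
  · ext u
    simp only [Set.mem_setOf_eq]
    constructor
    · rintro ⟨n, hn⟩
      have hG1 : u + n • (((0 : ℤ), (α : ℤ)) : ℤ × ℤ) ∈ G := hSG _ hn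
      have hG2 : (((0 : ℤ), (α : ℤ)) : ℤ × ℤ) ∈ G := hSG _ hv01
      have : u ∈ G := by
        have := G.sub_mem hG1 (G.nsmul_mem hG2 n)
        simpa using this
      refine ⟨this, ?_⟩
      have h2 := (hSnn _ hn).1
      simpa using h2
    · rintro ⟨huG, hx⟩
      obtain ⟨t, ht⟩ := hGdvd u huG
      have ht' : u.2 = u.1 * ((α : ℤ) - 1) + (α : ℤ) * (t - u.1) := by linarith [ht]
      set t' : ℤ := t - u.1 with ht'def
      by_cases h0t : 0 ≤ t'
      · refine ⟨0, ?_⟩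
        have heq : u + (0 : ℕ) • (((0 : ℤ), (α : ℤ)) : ℤ × ℤ)
            = u.1.toNat • (((1 : ℤ), (α : ℤ) - 1) : ℤ × ℤ)
              + t'.toNat • (((0 : ℤ), (α : ℤ)) : ℤ × ℤ) := by
          have h2 : (u.1.toNat : ℤ) = u.1 := Int.toNat_of_nonneg hx
          have h3 : (t'.toNat : ℤ) = t' := Int.toNat_of_nonneg h0t
          apply Prod.ext <;> simp [nsmul_eq_mul, h2, h3] <;> linarith [ht']
        rw [heq]
        exact S.add_mem (S.nsmul_mem hvB _) (S.nsmul_mem hv01 _)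
      · refine ⟨(-t').toNat, ?_⟩
        have heq : u + (-t').toNat • (((0 : ℤ), (α : ℤ)) : ℤ × ℤ)
            = u.1.toNat • (((1 : ℤ), (α : ℤ) - 1) : ℤ × ℤ) := by
          have h2 : (u.1.toNat : ℤ) = u.1 := Int.toNat_of_nonneg hx
          have h3 : (((-t').toNat : ℕ) : ℤ) = -t' := Int.toNat_of_nonneg (by linarith)
          apply Prod.ext <;> simp [nsmul_eq_mul, h2, h3] <;> linarith [ht']
        rw [heq]
        exact S.nsmul_mem hvB _
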